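/- Let s := (20 + √57)^{1/3} and β2 := (s + 7/s)/√21. Then β2²·(β2² − 1)² = 4q², where q := 20/(21√21). Consequently, the functions x ↦ cos(β2·x) and x ↦ sin(β2·x) satisfy the sixth-order linear ordinary differential equation f⁽⁶⁾ + 2f⁽⁴⁾ + f'' + 4q²·f = 0 on ℝ. -/

import Mathlib

noncomputable def q : ℝ := 20 / (21 * Real.sqrt 21)

noncomputable def s : ℝ := (20 + Real.sqrt 57) ^ ((1 : ℝ) / 3)

noncomputable def β2 : ℝ := (s + 7 / s) / Real.sqrt 21

lemma dcos (b c : ℝ) :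
    deriv (fun x => c * Real.cos (b * x)) = fun x => -(c * b) * Real.sin (b * x) := by
  funext x
  have h : HasDerivAt (fun x : ℝ => c * Real.cos (b * x)) (-(c * b) * Real.sin (b * x)) x := by
    have h1 : HasDerivAt (fun x : ℝ => b * x) b x := by
      simpa using (hasDerivAt_id x).const_mul b
    have h2 := (Real.hasDerivAt_cos (b * x)).comp x h1
    have := h2.const_mul c
    exact this.congr_deriv (by ring)
  exact h.deriv

lemma dsin (b c : ℝ) :
    deriv (fun x => c * Real.sin (b * x)) = fun x => (c * b) * Real.cos (b * x) := by
  funext x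
  have h : HasDerivAt (fun x : ℝ => c * Real.sin (b * x)) ((c * b) * Real.cos (b * x)) x := by
    have h1 : HasDerivAt (fun x : ℝ => b * x) b x := by
      simpa using (hasDerivAt_id x).const_mul b
    have h2 := (Real.hasDerivAt_sin (b * x)).comp x h1
    have := h2.const_mul c
    exact this.congr_deriv (by ring)
  exact h.deriv

lemma evencos (b : ℝ) (n : ℕ) :
    iteratedDeriv (2 * n) (fun y => Real.cos (b * y)) = fun x => (-(b ^ 2)) ^ n * Real.cos (b * x) := by
  induction n with
  | zero => simp [iteratedDeriv_zero]
  | succ n ih =>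
      have h : 2 * (n + 1) = (2 * n + 1) + 1 := by ring
      rw [h, iteratedDeriv_succ, iteratedDeriv_succ, ih, dcos, dsin]
      funext x
      ring

lemma evensin (b : ℝ) (n : ℕ) :
    iteratedDeriv (2 * n) (fun y => Real.sin (b * y)) = fun x => (-(b ^ 2)) ^ n * Real.sin (b * x) := by
  induction n with
  | zero => simp [iteratedDeriv_zero]
  | succ n ih =>
      have h : 2 * (n + 1) = (2 * n + 1) + 1 := by ring
      rw [h, iteratedDeriv_succ, iteratedDeriv_succ, ih, dsin, dcos]
      funext x
      ring

lemma key : β2 ^ 2 * (β2 ^ 2 - 1) ^ 2 = 4 * q ^ 2 := by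
  have h57 : Real.sqrt 57 ^ 2 = 57 := Real.sq_sqrt (by norm_num)
  have h21 : Real.sqrt 21 ^ 2 = 21 := Real.sq_sqrt (by norm_num)
  have h21pos : (0 : ℝ) < Real.sqrt 21 := Real.sqrt_pos.mpr (by norm_num)
  have hbase : (0 : ℝ) < 20 + Real.sqrt 57 := by positivity
  have hspos : 0 < s := Real.rpow_pos_of_pos hbase _
  have hs3 : s ^ 3 = 20 + Real.sqrt 57 := by
    rw [s, ← Real.rpow_natCast ((20 + Real.sqrt 57) ^ ((1:ℝ)/3)) 3,
      ← Real.rpow_mul hbase.le]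
    norm_num
  set t : ℝ := s + 7 / s with ht
  have ht3 : t ^ 3 = 21 * t + 40 := by
    have hs0 : s ≠ 0 := ne_of_gt hspos
    have hq : (s ^ 3) ^ 2 - 40 * s ^ 3 + 343 = 0 := by
      rw [hs3]; nlinarith [h57]
    rw [ht]
    field_simp
    nlinarith [hq]
  have hb : β2 = t / Real.sqrt 21 := rfl
  rw [hb, q]
  have hT : t ^ 2 * (t ^ 2 - 21) ^ 2 = 1600 := by
    linear_combination (t ^ 3 - 21 * t + 40) * ht3
  field_simp
  linear_combination 441 * hT + (-441 * t ^ 2 * (2 * t ^ 2 - Real.sqrt 21 ^ 2 - 21) - 1600 * (Real.sqrt 21 ^ 2 + 21)) * h21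

/-- β2²·(β2² − 1)² = 4q², and consequently cos(β2·x) and sin(β2·x)
solve the sixth-order ODE f⁽⁶⁾ + 2f⁽⁴⁾ + f'' + 4q²·f = 0 on ℝ. -/
theorem stmt_14 :
    β2 ^ 2 * (β2 ^ 2 - 1) ^ 2 = 4 * q ^ 2 ∧
    (∀ x : ℝ,
      iteratedDeriv 6 (fun y => Real.cos (β2 * y)) x
        + 2 * iteratedDeriv 4 (fun y => Real.cos (β2 * y)) x
        + iteratedDeriv 2 (fun y => Real.cos (β2 * y)) x
        + 4 * q ^ 2 * Real.cos (β2 * x) = 0) ∧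
    (∀ x : ℝ,
      iteratedDeriv 6 (fun y => Real.sin (β2 * y)) x
        + 2 * iteratedDeriv 4 (fun y => Real.sin (β2 * y)) x
        + iteratedDeriv 2 (fun y => Real.sin (β2 * y)) x
        + 4 * q ^ 2 * Real.sin (β2 * x) = 0) := by
  refine ⟨key, ?_, ?_⟩
  · intro x
    have h6 : iteratedDeriv 6 (fun y => Real.cos (β2 * y)) x
        = (-(β2 ^ 2)) ^ 3 * Real.cos (β2 * x) := congrFun (evencos β2 3) x
    have h4 : iteratedDeriv 4 (fun y => Real.cos (β2 * y)) x
        = (-(β2 ^ 2)) ^ 2 * Real.cos (β2 * x) := congrFun (evencos β2 2) x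
    have h2 : iteratedDeriv 2 (fun y => Real.cos (β2 * y)) x
        = (-(β2 ^ 2)) ^ 1 * Real.cos (β2 * x) := congrFun (evencos β2 1) x
    rw [h6, h4, h2]
    linear_combination (-Real.cos (β2 * x)) * key
  · intro x
    have h6 : iteratedDeriv 6 (fun y => Real.sin (β2 * y)) x
        = (-(β2 ^ 2)) ^ 3 * Real.sin (β2 * x) := congrFun (evensin β2 3) x
    have h4 : iteratedDeriv 4 (fun y => Real.sin (β2 * y)) x
        = (-(β2 ^ 2)) ^ 2 * Real.sin (β2 * x) := congrFun (evensin β2 2) x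
    have h2 : iteratedDeriv 2 (fun y => Real.sin (β2 * y)) x
        = (-(β2 ^ 2)) ^ 1 * Real.sin (β2 * x) := congrFun (evensin β2 1) x
    rw [h6, h4, h2]
    linear_combination (-Real.sin (β2 * x)) * key
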